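/- Let n ≥ 4 be divisible by 4. Then there exists a simple graph G on n vertices with minimum degree δ(G) = 3n/4 - 1 together with a 2-edge-colouring of G such that every monochromatic component has order exactly n/2. -/

import Mathlib

open SimpleGraph

/-- The colour-`i` subgraph of the graph `G` under the edge-colouring `c`. -/
def colourSub {V : Type*} {k : ℕ} (G : SimpleGraph V) (c : Sym2 V → Fin k) (i : Fin k) :
    SimpleGraph V where
  Adj u v := G.Adj u v ∧ c s(u, v) = i
  symm := by
    refine ⟨?_⟩
    intro u v h
    exact ⟨h.1.symm, by rw [Sym2.eq_swap]; exact h.2⟩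
  loopless := by
    refine ⟨?_⟩
    intro u h
    exact G.irrefl h.1

/-- `K` is a monochromatic component of colour `i`: a connected component of the colour-`i`
subgraph of `G` that contains at least one edge. Its order is `K.supp.ncard`. -/
def IsMonoComp {V : Type*} {k : ℕ} (G : SimpleGraph V) (c : Sym2 V → Fin k) (i : Fin k)
    (K : (colourSub G c i).ConnectedComponent) : Prop :=
  ∃ u v, (colourSub G c i).Adj u v ∧ (colourSub G c i).connectedComponentMk u = K

/-- The minimum degree of a finite simple graph (classical version). -/
noncomputable def minDeg {V : Type*} [Fintype V] (G : SimpleGraph V) : ℕ :=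
  @SimpleGraph.minDegree V G _ (Classical.decRel _)

private lemma reachInv {V α : Type*} {H : SimpleGraph V} {p : V → α}
    (h : ∀ u v, H.Adj u v → p u = p v) {u v : V} (hr : H.Reachable u v) : p u = p v := by
  obtain ⟨w⟩ := hr
  induction w with
  | nil => rfl
  | cons h' _ ih => exact (h _ _ h').trans ih

private lemma ncard_of_bij {n k : ℕ} (S : Set (Fin n)) (f : Fin k → ℕ)
    (hlt : ∀ i, f i < n) (hinj : ∀ i j : Fin k, f i = f j → i = j)
    (hmem : ∀ v : Fin n, v ∈ S ↔ ∃ i, f i = v.val) : S.ncard = k := by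
  have hS : S = Set.range (fun i : Fin k => (⟨f i, hlt i⟩ : Fin n)) := by
    ext v
    simp only [Set.mem_range, hmem]
    constructor
    · rintro ⟨i, hi⟩; exact ⟨i, Fin.ext hi⟩
    · rintro ⟨i, hi⟩; exact ⟨i, congrArg Fin.val hi⟩
  have hinj' : Function.Injective (fun i : Fin k => (⟨f i, hlt i⟩ : Fin n)) := by
    intro i j hij
    exact hinj i j (congrArg Fin.val hij)
  rw [hS, ← Set.image_univ, Set.ncard_image_of_injective _ hinj', Set.ncard_univ,
    Nat.card_eq_fintype_card, Fintype.card_fin]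

private lemma minDeg_eq_of_regular {V : Type*} [Fintype V] [Nonempty V] (G : SimpleGraph V)
    (k : ℕ) (h : ∀ v : V, (G.neighborSet v).ncard = k) : minDeg G = k := by
  classical
  have hdeg : ∀ (v : V) (inst : Fintype (G.neighborSet v)), @SimpleGraph.degree V G v inst = k := by
    intro v inst
    rw [← h v, ← @SimpleGraph.card_neighborSet_eq_degree V G v inst,
      ← Nat.card_coe_set_eq, Nat.card_eq_fintype_card]
  unfold minDeg
  apply le_antisymm
  · exact le_trans (SimpleGraph.minDegree_le_degree G (Classical.arbitrary V)) (le_of_eq (hdeg _ _))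
  · exact SimpleGraph.le_minDegree_of_forall_le_degree G k (fun v => le_of_eq (hdeg v _).symm)

/-- For n ≥ 4 divisible by 4, there is a graph G on n vertices with δ(G) = 3n/4 - 1 and a
2-edge-colouring in which every monochromatic component has order exactly n/2. -/
theorem stmt_4 (n : ℕ) (hn : 4 ≤ n) (hdvd : 4 ∣ n) :
    ∃ (G : SimpleGraph (Fin n)) (c : Sym2 (Fin n) → Fin 2),
      minDeg G = 3 * n / 4 - 1 ∧
      ∀ (i : Fin 2) (K : (colourSub G c i).ConnectedComponent),
        IsMonoComp G c i K → 2 * K.supp.ncard = n := by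
  classical
  obtain ⟨m, rfl⟩ := hdvd
  have hm : 1 ≤ m := by omega
  have hne : Nonempty (Fin (4 * m)) := ⟨⟨0, by omega⟩⟩
  set G : SimpleGraph (Fin (4 * m)) :=
    { Adj := fun u v => u ≠ v ∧ ((u.val < 2 * m ↔ v.val < 2 * m) ∨ u.val % 2 = v.val % 2)
      symm := by
        refine ⟨?_⟩
        intro u v ⟨h1, h2⟩
        exact ⟨h1.symm, by tauto⟩
      loopless := by refine ⟨?_⟩; intro u ⟨h1, _⟩; exact h1 rfl } with hG
  set c : Sym2 (Fin (4 * m)) → Fin 2 :=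
    Sym2.lift ⟨fun u v => if u.val < 2 * m ↔ v.val < 2 * m then (0 : Fin 2) else 1, by
      intro u v
      simp only []
      by_cases h : (u.val < 2 * m ↔ v.val < 2 * m)
      · rw [if_pos h, if_pos h.symm]
      · rw [if_neg h, if_neg (fun hh => h hh.symm)]⟩ with hc
  have hadj0 : ∀ u v : Fin (4 * m),
      (colourSub G c 0).Adj u v ↔ u ≠ v ∧ (u.val < 2 * m ↔ v.val < 2 * m) := by
    intro u v
    show (G.Adj u v ∧ c s(u, v) = 0) ↔ _
    rw [hc]
    simp only [Sym2.lift_mk]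
    constructor
    · rintro ⟨⟨h1, _⟩, h3⟩
      refine ⟨h1, ?_⟩
      by_contra h
      rw [if_neg h] at h3
      exact absurd h3 (by decide)
    · rintro ⟨h1, h2⟩
      exact ⟨⟨h1, Or.inl h2⟩, if_pos h2⟩
  have hadj1 : ∀ u v : Fin (4 * m),
      (colourSub G c 1).Adj u v ↔
        ¬(u.val < 2 * m ↔ v.val < 2 * m) ∧ u.val % 2 = v.val % 2 := by
    intro u v
    show (G.Adj u v ∧ c s(u, v) = 1) ↔ _
    rw [hc]
    simp only [Sym2.lift_mk]
    constructor
    · rintro ⟨⟨h1, h2⟩, h3⟩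
      by_cases h : (u.val < 2 * m ↔ v.val < 2 * m)
      · rw [if_pos h] at h3
        exact absurd h3 (by decide)
      · exact ⟨h, by tauto⟩
    · rintro ⟨h1, h2⟩
      have hne' : u ≠ v := by
        intro h; rw [h] at h1; exact h1 Iff.rfl
      exact ⟨⟨hne', Or.inr h2⟩, if_neg h1⟩
  refine ⟨G, c, ?_, ?_⟩
  · -- minimum degree
    have harith : 3 * (4 * m) / 4 - 1 = 3 * m - 1 := by omega
    rw [harith]
    apply minDeg_eq_of_regular
    intro v
    have hv4 := v.isLt
    set D : Set (Fin (4 * m)) :=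
      {w | ¬(w.val < 2 * m ↔ v.val < 2 * m) ∧ w.val % 2 ≠ v.val % 2} with hD
    have hDcard : D.ncard = m := by
      by_cases hr : v.val < 2 * m
      · by_cases hp : v.val % 2 = 0
        · apply ncard_of_bij _ (fun i : Fin m => 2 * m + 2 * i.val + 1)
            (fun i => by have := i.isLt; omega) (fun i j h => Fin.ext (by omega))
          intro w
          simp only [hD, Set.mem_setOf_eq]
          have hw4 := w.isLt
          constructor
          · rintro ⟨h1, h2⟩
            exact ⟨⟨(w.val - 2 * m) / 2, by omega⟩, by simp only []; omega⟩
          · rintro ⟨i, hi⟩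
            try simp only [] at hi
            have := i.isLt
            omega
        · apply ncard_of_bij _ (fun i : Fin m => 2 * m + 2 * i.val)
            (fun i => by have := i.isLt; omega) (fun i j h => Fin.ext (by omega))
          intro w
          simp only [hD, Set.mem_setOf_eq]
          have hw4 := w.isLt
          constructor
          · rintro ⟨h1, h2⟩
            exact ⟨⟨(w.val - 2 * m) / 2, by omega⟩, by simp only []; omega⟩
          · rintro ⟨i, hi⟩
            try simp only [] at hi
            have := i.isLt
            omega
      · by_cases hp : v.val % 2 = 0
        · apply ncard_of_bij _ (fun i : Fin m => 2 * i.val + 1)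
            (fun i => by have := i.isLt; omega) (fun i j h => Fin.ext (by omega))
          intro w
          simp only [hD, Set.mem_setOf_eq]
          have hw4 := w.isLt
          constructor
          · rintro ⟨h1, h2⟩
            exact ⟨⟨(w.val - 1) / 2, by omega⟩, by simp only []; omega⟩
          · rintro ⟨i, hi⟩
            try simp only [] at hi
            have := i.isLt
            omega
        · apply ncard_of_bij _ (fun i : Fin m => 2 * i.val)
            (fun i => by have := i.isLt; omega) (fun i j h => Fin.ext (by omega))
          intro w
          simp only [hD, Set.mem_setOf_eq]
          have hw4 := w.isLt
          constructor
          · rintro ⟨h1, h2⟩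
            exact ⟨⟨w.val / 2, by omega⟩, by simp only []; omega⟩
          · rintro ⟨i, hi⟩
            try simp only [] at hi
            have := i.isLt
            omega
    have hNS : G.neighborSet v = (Set.univ \ D) \ {v} := by
      ext w
      simp only [SimpleGraph.mem_neighborSet, Set.mem_diff, Set.mem_univ, true_and,
        Set.mem_singleton_iff, hD, Set.mem_setOf_eq]
      constructor
      · rintro ⟨h1, h2⟩
        exact ⟨by tauto, fun h => h1 h.symm⟩
      · rintro ⟨h1, h2⟩
        refine ⟨fun h => h2 h.symm, ?_⟩
        by_cases hiff : (w.val < 2 * m ↔ v.val < 2 * m)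
        · exact Or.inl (by tauto)
        · exact Or.inr (by tauto)
    rw [hNS]
    have hvD : v ∉ D := fun hmem => hmem.1 Iff.rfl
    have h1 : (Set.univ \ D).ncard = 4 * m - m := by
      rw [Set.ncard_diff (Set.subset_univ D), Set.ncard_univ, Nat.card_eq_fintype_card,
        Fintype.card_fin, hDcard]
    have hvmem : v ∈ Set.univ \ D := ⟨Set.mem_univ v, hvD⟩
    rw [Set.ncard_diff_singleton_of_mem hvmem, h1]
    omega
  · -- monochromatic components
    rintro i K ⟨u, v, hadj, hK⟩
    fin_cases i
    · -- colour 0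
      have hinv : ∀ x y : Fin (4 * m), (colourSub G c 0).Adj x y →
          ((x.val < 2 * m) = (y.val < 2 * m)) := by
        intro x y hxy
        exact propext ((hadj0 x y).mp hxy).2
      have hsupp : K.supp = {w : Fin (4 * m) | w.val < 2 * m ↔ u.val < 2 * m} := by
        ext w
        simp only [ConnectedComponent.mem_supp_iff, ← hK, ConnectedComponent.eq,
          Set.mem_setOf_eq]
        constructor
        · intro hr
          exact iff_of_eq (reachInv hinv hr)
        · intro h
          by_cases hwu : w = u
          · subst hwu; exact Reachable.refl w
          · exact ((hadj0 w u).mpr ⟨hwu, h⟩).reachable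
      have hcard : K.supp.ncard = 2 * m := by
        rw [hsupp]
        by_cases hu : u.val < 2 * m
        · apply ncard_of_bij _ (fun i : Fin (2 * m) => i.val)
            (fun i => by have := i.isLt; omega) (fun i j h => Fin.ext h)
          intro w
          simp only [Set.mem_setOf_eq]
          constructor
          · intro h
            exact ⟨⟨w.val, h.mpr hu⟩, rfl⟩
          · rintro ⟨i, hi⟩
            try simp only [] at hi
            have := i.isLt
            omega
        · apply ncard_of_bij _ (fun i : Fin (2 * m) => i.val + 2 * m)
            (fun i => by have := i.isLt; omega) (fun i j h => Fin.ext (by omega))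
          intro w
          simp only [Set.mem_setOf_eq]
          have hw4 := w.isLt
          constructor
          · intro h
            have hw : ¬ w.val < 2 * m := fun hw => hu (h.mp hw)
            exact ⟨⟨w.val - 2 * m, by omega⟩, by simp only []; omega⟩
          · rintro ⟨i, hi⟩
            try simp only [] at hi
            have := i.isLt
            omega
      omega
    · -- colour 1
      have hinv : ∀ x y : Fin (4 * m), (colourSub G c 1).Adj x y →
          (x.val % 2 = y.val % 2) := by
        intro x y hxy
        exact ((hadj1 x y).mp hxy).2
      have hsupp : K.supp = {w : Fin (4 * m) | w.val % 2 = u.val % 2} := by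
        ext w
        simp only [ConnectedComponent.mem_supp_iff, ← hK, ConnectedComponent.eq,
          Set.mem_setOf_eq]
        constructor
        · intro hr
          exact reachInv hinv hr
        · intro h
          by_cases hwu : w = u
          · subst hwu; exact Reachable.refl w
          · by_cases hiff : (w.val < 2 * m ↔ u.val < 2 * m)
            · -- need an intermediate vertex t on the other side with same parity
              have hu4 := u.isLt
              have hw4 := w.isLt
              by_cases hul : u.val < 2 * m
              · set t : Fin (4 * m) := ⟨u.val + 2 * m, by omega⟩ with ht
                have hadjwt : (colourSub G c 1).Adj w t := by
                  rw [hadj1]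
                  constructor
                  · simp only [ht]
                    omega
                  · simp only [ht]
                    omega
                have hadjtu : (colourSub G c 1).Adj t u := by
                  rw [hadj1]
                  constructor
                  · simp only [ht]
                    omega
                  · simp only [ht]
                    omega
                exact hadjwt.reachable.trans hadjtu.reachable
              · set t : Fin (4 * m) := ⟨u.val - 2 * m, by omega⟩ with ht
                have hadjwt : (colourSub G c 1).Adj w t := by
                  rw [hadj1]
                  constructor
                  · simp only [ht]
                    omega
                  · simp only [ht]
                    omega
                have hadjtu : (colourSub G c 1).Adj t u := by
                  rw [hadj1]
                  constructor
                  · simp only [ht]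
                    omega
                  · simp only [ht]
                    omega
                exact hadjwt.reachable.trans hadjtu.reachable
            · exact ((hadj1 w u).mpr ⟨hiff, h⟩).reachable
      have hcard : K.supp.ncard = 2 * m := by
        rw [hsupp]
        by_cases hu : u.val % 2 = 0
        · apply ncard_of_bij _ (fun i : Fin (2 * m) => 2 * i.val)
            (fun i => by have := i.isLt; omega) (fun i j h => Fin.ext (by omega))
          intro w
          simp only [Set.mem_setOf_eq]
          have hw4 := w.isLt
          constructor
          · intro h
            exact ⟨⟨w.val / 2, by omega⟩, by simp only []; omega⟩
          · rintro ⟨i, hi⟩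
            try simp only [] at hi
            have := i.isLt
            omega
        · apply ncard_of_bij _ (fun i : Fin (2 * m) => 2 * i.val + 1)
            (fun i => by have := i.isLt; omega) (fun i j h => Fin.ext (by omega))
          intro w
          simp only [Set.mem_setOf_eq]
          have hw4 := w.isLt
          constructor
          · intro h
            exact ⟨⟨(w.val - 1) / 2, by omega⟩, by simp only []; omega⟩
          · rintro ⟨i, hi⟩
            try simp only [] at hi
            have := i.isLt
            omega
      omega
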